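/- Let a, b ∈ ℝ, let ρ be a constant skew-symmetric n×n real matrix, and let P₀ be a constant symmetric n×n real matrix. Let 𝕀 ⊆ ℝ be a nonempty open interval and u : 𝕀 → ℝ a smooth function with u'(t) = a − b·u(t) and a − b·u(t) > 0 for all t ∈ 𝕀 (so u is strictly increasing onto an interval 𝕌 = u(𝕀)). Define P : 𝕌 → Sym(n,ℝ) by P(u(t)) = (a − b·u(t))^{−2} e^{tρ} P₀ e^{−tρ}, and define P̃ : 𝕀 → Sym(n,ℝ) by P̃(t) = e^{tρ}(P₀ − (b²/4)I)e^{−tρ}. Then the diffeomorphism Φ : 𝕀×ℝ×ℝⁿ → 𝕌×ℝ×ℝⁿ given by Φ(t,V,X) = ( u(t), V − (b/4)XᵀX, (a − b·u(t))^{1/2} X ) satisfies Φ*G_β(P) = Ω · G_β(P̃), where Ω(t,V,X) = a − b·u(t); that is, Φ is a conformal isometry from (𝕀×ℝ×ℝⁿ, G_β(P̃)) onto (𝕌×ℝ×ℝⁿ, G_β(P)) with conformal factor a − bu. -/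

import Mathlib

open Matrix

attribute [local instance] Matrix.normedAddCommGroup Matrix.normedSpace

noncomputable section

/-- The manifold `ℝ × ℝ × ℝⁿ`, with points `(u, v, x)`. -/
abbrev Mfd (n : ℕ) := ℝ × ℝ × (Fin n → ℝ)

/-- The Brinkmann metric `2 du dv + xᵀ p(u) x du² − dxᵀ dx`, as a field of bilinear forms. -/
def Gb (n : ℕ) (p : ℝ → Matrix (Fin n) (Fin n) ℝ) :
    Mfd n → Mfd n → Mfd n → ℝ := fun m X₁ X₂ =>
  X₁.1 * X₂.2.1 + X₂.1 * X₁.2.1 + (m.2.2 ⬝ᵥ (p m.1 *ᵥ m.2.2)) * X₁.1 * X₂.1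
    - X₁.2.2 ⬝ᵥ X₂.2.2

/-- Pullback of a field of bilinear forms under a smooth map. -/
def pull (n : ℕ) (φ : Mfd n → Mfd n) (G : Mfd n → Mfd n → Mfd n → ℝ) :
    Mfd n → Mfd n → Mfd n → ℝ := fun m X Y =>
  G (φ m) (fderiv ℝ φ m X) (fderiv ℝ φ m Y)

lemma hasFDerivAt_dotSelf (n : ℕ) (x : Fin n → ℝ) :
    HasFDerivAt (fun y : Fin n → ℝ => y ⬝ᵥ y)
      (∑ i : Fin n, (x i • (ContinuousLinearMap.proj i : (Fin n → ℝ) →L[ℝ] ℝ)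
        + x i • (ContinuousLinearMap.proj i : (Fin n → ℝ) →L[ℝ] ℝ))) x := by
  have h : (fun y : Fin n → ℝ => y ⬝ᵥ y) = fun y => ∑ i : Fin n, y i * y i := rfl
  rw [h]
  exact HasFDerivAt.fun_sum fun i _ => (hasFDerivAt_apply i x).mul (hasFDerivAt_apply i x)

lemma fderivPhi (n : ℕ)
    (a b : ℝ)
    (I : Set ℝ)
    (u : ℝ → ℝ)
    (hode : ∀ t ∈ I, HasDerivAt u (a - b * u t) t)
    (hpos : ∀ t ∈ I, 0 < a - b * u t)
    (Φ : Mfd n → Mfd n)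
    (hΦ : Φ = fun m =>
      (u m.1, m.2.1 - (b / 4) * (m.2.2 ⬝ᵥ m.2.2), Real.sqrt (a - b * u m.1) • m.2.2))
    (m : Mfd n) (hm : m.1 ∈ I) :
    ∀ X : Mfd n, fderiv ℝ Φ m X =
      ((a - b * u m.1) * X.1,
       X.2.1 - (b / 2) * (m.2.2 ⬝ᵥ X.2.2),
       Real.sqrt (a - b * u m.1) • X.2.2
         + (-(b / 2) * Real.sqrt (a - b * u m.1) * X.1) • m.2.2) := by
  subst hΦ
  obtain ⟨t, V, x⟩ := m
  simp only at hm ⊢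
  set s : ℝ := a - b * u t with hs
  have hspos : 0 < s := hpos t hm
  have hq : Real.sqrt s ≠ 0 := by positivity
  have hq2 : Real.sqrt s * Real.sqrt s = s := Real.mul_self_sqrt hspos.le
  -- first component
  have hfst : HasFDerivAt (fun m : Mfd n => m.1)
      (ContinuousLinearMap.fst ℝ ℝ (ℝ × (Fin n → ℝ))) (t, V, x) := hasFDerivAt_fst
  have h1 : HasFDerivAt (fun m : Mfd n => u m.1)
      (((1 : ℝ →L[ℝ] ℝ).smulRight s).comp (ContinuousLinearMap.fst ℝ ℝ (ℝ × (Fin n → ℝ))))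
      (t, V, x) := (hode t hm).hasFDerivAt.comp _ hfst
  -- snd-related projections
  have hsnd : HasFDerivAt (fun m : Mfd n => m.2)
      (ContinuousLinearMap.snd ℝ ℝ (ℝ × (Fin n → ℝ))) (t, V, x) := hasFDerivAt_snd
  have h21 : HasFDerivAt (fun m : Mfd n => m.2.1)
      ((ContinuousLinearMap.fst ℝ ℝ (Fin n → ℝ)).comp
        (ContinuousLinearMap.snd ℝ ℝ (ℝ × (Fin n → ℝ)))) (t, V, x) :=
    hasFDerivAt_fst.comp _ hsnd
  have h22' : HasFDerivAt (fun m : Mfd n => m.2.2 ⬝ᵥ m.2.2)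
      ((∑ i : Fin n, (x i • (ContinuousLinearMap.proj i : (Fin n → ℝ) →L[ℝ] ℝ)
        + x i • (ContinuousLinearMap.proj i : (Fin n → ℝ) →L[ℝ] ℝ))).comp
        ((ContinuousLinearMap.snd ℝ ℝ (Fin n → ℝ)).comp
          (ContinuousLinearMap.snd ℝ ℝ (ℝ × (Fin n → ℝ))))) (t, V, x) :=
    by have := (hasFDerivAt_dotSelf n x).comp (t, V, x) (hasFDerivAt_snd.comp (t, V, x) hsnd); exact this
  have h2 := h21.sub (h22'.const_mul (b / 4))
  -- third component
  have hc : HasDerivAt (fun t => Real.sqrt (a - b * u t)) (-(b * s) / (2 * Real.sqrt s)) t := by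
    have hin : HasDerivAt (fun t => a - b * u t) (-(b * (a - b * u t))) t :=
      ((hode t hm).const_mul b).const_sub a
    exact hin.sqrt hspos.ne'
  have h3 := (hc.hasFDerivAt.comp _ hfst).smul
    ((hasFDerivAt_snd.comp _ hsnd) :
      HasFDerivAt (fun m : Mfd n => m.2.2)
        ((ContinuousLinearMap.snd ℝ ℝ (Fin n → ℝ)).comp
          (ContinuousLinearMap.snd ℝ ℝ (ℝ × (Fin n → ℝ)))) (t, V, x))
  have hΦder : HasFDerivAt (fun m : Mfd n =>
      (u m.1, m.2.1 - b / 4 * (m.2.2 ⬝ᵥ m.2.2), Real.sqrt (a - b * u m.1) • m.2.2))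
      _ (t, V, x) := h1.prodMk (h2.prodMk h3)
  intro X
  rw [hΦder.fderiv]
  simp only [ContinuousLinearMap.prod_apply, ContinuousLinearMap.comp_apply,
    ContinuousLinearMap.smulRight_apply, ContinuousLinearMap.one_apply,
    ContinuousLinearMap.coe_fst', ContinuousLinearMap.coe_snd',
    ContinuousLinearMap.sub_apply, ContinuousLinearMap.add_apply,
    ContinuousLinearMap.coe_sum', Finset.sum_apply,
    ContinuousLinearMap.smul_apply, ContinuousLinearMap.proj_apply, smul_eq_mul]
  refine Prod.ext ?_ (Prod.ext ?_ ?_)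
  · simp [mul_comm]
  · simp only [dotProduct, Finset.mul_sum]
    congr 1
    exact Finset.sum_congr rfl fun i _ => by ring
  · simp only [Function.comp_apply, ContinuousLinearMap.toSpanSingleton_apply, smul_eq_mul]
    have hd : -(b * s) / (2 * Real.sqrt s) = -(b / 2) * Real.sqrt s := by
      rw [div_eq_iff (by positivity : (2 : ℝ) * Real.sqrt s ≠ 0)]
      linear_combination b * hq2
    congr 1
    rw [hd]
    ring

/-- `Φ(t,V,X) = (u(t), V − (b/4)XᵀX, (a − bu(t))^{1/2} X)` is a conformal
isometry from `G_β(P̃)` onto `G_β(P)`, with conformal factor `a − bu`, where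
`u' = a − bu > 0`, `P(u(t)) = (a − bu(t))⁻² e^{tρ} P₀ e^{−tρ}` and
`P̃(t) = e^{tρ}(P₀ − (b²/4)I)e^{−tρ}`. -/
theorem stmt5 (n : ℕ) (hn : 1 ≤ n)
    (a b : ℝ) (ρ P₀ : Matrix (Fin n) (Fin n) ℝ)
    (hρ : ρᵀ = -ρ) (hP₀ : P₀ᵀ = P₀)
    (I : Set ℝ) (hIopen : IsOpen I) (hIconv : Convex ℝ I) (hIne : I.Nonempty)
    (u : ℝ → ℝ) (husmooth : ContDiffOn ℝ (⊤ : ℕ∞) u I)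
    (hode : ∀ t ∈ I, HasDerivAt u (a - b * u t) t)
    (hpos : ∀ t ∈ I, 0 < a - b * u t)
    (P : ℝ → Matrix (Fin n) (Fin n) ℝ)
    (hP : ∀ t ∈ I, P (u t) = ((a - b * u t) ^ 2)⁻¹ •
      (NormedSpace.exp (t • ρ) * P₀ * NormedSpace.exp (-(t • ρ))))
    (Pt : ℝ → Matrix (Fin n) (Fin n) ℝ)
    (hPt : ∀ t : ℝ, Pt t = NormedSpace.exp (t • ρ) *
      (P₀ - ((b ^ 2 / 4) : ℝ) • (1 : Matrix (Fin n) (Fin n) ℝ)) *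
      NormedSpace.exp (-(t • ρ)))
    (Φ : Mfd n → Mfd n)
    (hΦ : Φ = fun m =>
      (u m.1, m.2.1 - (b / 4) * (m.2.2 ⬝ᵥ m.2.2), Real.sqrt (a - b * u m.1) • m.2.2)) :
    (∀ m ∈ {m : Mfd n | m.1 ∈ I}, ∀ X Y,
      pull n Φ (Gb n P) m X Y = (a - b * u m.1) * Gb n Pt m X Y) ∧
    Set.BijOn Φ {m : Mfd n | m.1 ∈ I} {m : Mfd n | m.1 ∈ u '' I} := by
  have hsqrt_ne : ∀ t ∈ I, Real.sqrt (a - b * u t) ≠ 0 := fun t ht => by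
    have := hpos t ht; positivity
  constructor
  · intro m hm X Y
    simp only [Set.mem_setOf_eq] at hm
    obtain ⟨t, V, x⟩ := m
    simp only at hm ⊢
    have hfd := fderivPhi n a b I u hode hpos Φ hΦ (t, V, x) hm
    set s : ℝ := a - b * u t with hs
    have hspos : 0 < s := hpos t hm
    have hq2 : Real.sqrt s * Real.sqrt s = s := Real.mul_self_sqrt hspos.le
    set M : Matrix (Fin n) (Fin n) ℝ :=
      NormedSpace.exp (t • ρ) * P₀ * NormedSpace.exp (-(t • ρ)) with hM
    have hone : NormedSpace.exp (t • ρ) * NormedSpace.exp (-(t • ρ)) = 1 := by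
      rw [← Matrix.exp_add_of_commute (t • ρ) (-(t • ρ)) ((Commute.refl (t • ρ)).neg_right)]
      simp
    have hPt' : Pt t = M - ((b ^ 2 / 4) : ℝ) • (1 : Matrix (Fin n) (Fin n) ℝ) := by
      rw [hPt t, mul_sub, sub_mul]
      congr 1
      rw [mul_smul_comm, mul_one, smul_mul_assoc, hone]
    have hPtv : x ⬝ᵥ (Pt t *ᵥ x) = x ⬝ᵥ (M *ᵥ x) - (b ^ 2 / 4) * (x ⬝ᵥ x) := by
      rw [hPt', Matrix.sub_mulVec, Matrix.smul_mulVec, Matrix.one_mulVec,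
        dotProduct_sub, dotProduct_smul, smul_eq_mul]
    have hQ : (Real.sqrt s • x) ⬝ᵥ (P (u t) *ᵥ (Real.sqrt s • x)) =
        s⁻¹ * (x ⬝ᵥ (M *ᵥ x)) := by
      rw [hP t hm, ← hs, ← hM, Matrix.smul_mulVec, Matrix.mulVec_smul,
        smul_dotProduct, dotProduct_smul, dotProduct_smul, smul_eq_mul, smul_eq_mul,
        smul_eq_mul]
      rw [show Real.sqrt s * ((s ^ 2)⁻¹ * (Real.sqrt s * (x ⬝ᵥ (M *ᵥ x)))) =
        (Real.sqrt s * Real.sqrt s) * (s ^ 2)⁻¹ * (x ⬝ᵥ (M *ᵥ x)) from by ring, hq2]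
      rw [sq]
      rw [mul_inv]
      field_simp
    have hQ' : (Real.sqrt s • x) ⬝ᵥ (P (u t) *ᵥ (Real.sqrt s • x)) * (s * X.1) * (s * Y.1)
        = s * (x ⬝ᵥ (M *ᵥ x)) * X.1 * Y.1 := by
      rw [hQ]
      field_simp
    simp only [pull, Gb]
    rw [hfd X, hfd Y, hΦ]
    simp only []
    rw [hQ', hPtv]
    simp only [add_dotProduct, dotProduct_add, smul_dotProduct, dotProduct_smul,
      smul_eq_mul]
    rw [show ∀ z : Fin n → ℝ, z ⬝ᵥ x = x ⬝ᵥ z from fun z => dotProduct_comm z x]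
    linear_combination (-(X.2.2 ⬝ᵥ Y.2.2) + (b/2)*Y.1*(x ⬝ᵥ X.2.2)
      + (b/2)*X.1*(x ⬝ᵥ Y.2.2) - (b^2/4)*X.1*Y.1*(x ⬝ᵥ x)) * hq2
  · have hcont : ContinuousOn u I := fun t ht => (hode t ht).continuousAt.continuousWithinAt
    have hmono : StrictMonoOn u I := by
      apply strictMonoOn_of_deriv_pos hIconv hcont
      intro t ht
      rw [hIopen.interior_eq] at ht
      rw [(hode t ht).deriv]
      exact hpos t ht
    have hinj : Set.InjOn u I := hmono.injOn
    refine ⟨?_, ?_, ?_⟩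
    · intro m hm
      exact ⟨m.1, hm, by rw [hΦ]⟩
    · intro m hm m' hm' heq
      simp only [Set.mem_setOf_eq] at hm hm'
      rw [hΦ] at heq
      simp only [Prod.mk.injEq] at heq
      obtain ⟨h1, h2, h3⟩ := heq
      have ht : m.1 = m'.1 := hinj hm hm' h1
      rw [ht] at h3
      have hx : m.2.2 = m'.2.2 :=
        smul_right_injective (Fin n → ℝ) (hsqrt_ne m'.1 (ht ▸ hm)) h3
      have hv : m.2.1 = m'.2.1 := by
        have := h2
        rw [hx] at this
        linarith
      exact Prod.ext ht (Prod.ext hv hx)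
    · intro w hw
      simp only [Set.mem_setOf_eq] at hw
      obtain ⟨t, ht, hut⟩ := hw
      refine ⟨(t, w.2.1 + (b / 4) *
        (((Real.sqrt (a - b * u t))⁻¹ • w.2.2) ⬝ᵥ ((Real.sqrt (a - b * u t))⁻¹ • w.2.2)),
        (Real.sqrt (a - b * u t))⁻¹ • w.2.2), ht, ?_⟩
      rw [hΦ]
      simp only
      have hx3 : Real.sqrt (a - b * u t) • (Real.sqrt (a - b * u t))⁻¹ • w.2.2 = w.2.2 := by
        rw [smul_smul, mul_inv_cancel₀ (hsqrt_ne t ht), one_smul]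
      refine Prod.ext hut (Prod.ext ?_ hx3)
      simp
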